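/- Let H be a complex Hilbert space and T : H → H a bounded self-adjoint linear operator with ‖T‖ ≤ 1 such that −1 is not an eigenvalue of T (ker(I + T) = {0}). Then T is asymptotically regular: for every x ∈ H, ‖T^{k+1}x − T^k x‖ → 0 as k → ∞. -/

import Mathlib

open Filter ContinuousLinearMap
open scoped InnerProductSpace

/-- A self-adjoint non-expansive operator on a complex Hilbert space such that `-1`
is not an eigenvalue is asymptotically regular. -/
theorem stmt_5 {H : Type*} [NormedAddCommGroup H] [InnerProductSpace ℂ H]
    [CompleteSpace H] (T : H →L[ℂ] H) (hsa : IsSelfAdjoint T) (hT : ‖T‖ ≤ 1)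
    (hker : LinearMap.ker (((1 : H →L[ℂ] H) + T : H →L[ℂ] H) : H →ₗ[ℂ] H) = ⊥) :
    ∀ x : H, Tendsto (fun k : ℕ => ‖(T ^ (k + 1)) x - (T ^ k) x‖) atTop (nhds 0) := by
  classical
  set S : H →L[ℂ] H := 1 + T with hS
  set A : H →L[ℂ] H := 1 - T ^ 2 with hAdef
  have hstep : ∀ v : H, ‖T v‖ ≤ ‖v‖ := fun v =>
    (T.le_opNorm v).trans (by nlinarith [norm_nonneg v])
  have hpow : ∀ (k : ℕ) (v : H), ‖(T ^ k) v‖ ≤ ‖v‖ := by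
    intro k
    induction k with
    | zero => intro v; simp
    | succ n ih =>
      intro v
      rw [pow_succ]
      simpa [ContinuousLinearMap.mul_apply] using (ih (T v)).trans (hstep v)
  -- A is self-adjoint and positive
  have hAsa : IsSelfAdjoint A := (IsSelfAdjoint.one (R := H →L[ℂ] H)).sub (hsa.pow 2)
  have hre : ∀ v : H, RCLike.re (⟪A v, v⟫_ℂ) = ‖v‖ ^ 2 - ‖T v‖ ^ 2 := by
    intro v
    have h2 : (⟪(T ^ 2) v, v⟫_ℂ) = ⟪T v, T v⟫_ℂ := by
      have := hsa.isSymmetric (T v) v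
      simpa [pow_two, ContinuousLinearMap.mul_apply] using this
    have : (⟪A v, v⟫_ℂ) = ⟪v, v⟫_ℂ - ⟪T v, T v⟫_ℂ := by
      rw [hAdef, ContinuousLinearMap.sub_apply, inner_sub_left, h2, ContinuousLinearMap.one_apply]
    rw [this, map_sub, inner_self_eq_norm_sq, inner_self_eq_norm_sq]
  have hApos : A.IsPositive := by
    refine ⟨hAsa.isSymmetric, fun v => ?_⟩
    rw [ContinuousLinearMap.reApplyInnerSelf, hre]
    have := pow_le_pow_left₀ (norm_nonneg (T v)) (hstep v) 2
    linarith
  have hAnn : (0 : H →L[ℂ] H) ≤ A := (ContinuousLinearMap.nonneg_iff_isPositive A).2 hApos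
  set R : H →L[ℂ] H := CFC.sqrt A with hRdef
  have hRR : R * R = A := CFC.sqrt_mul_sqrt_self A hAnn
  have hRsa : IsSelfAdjoint R := IsSelfAdjoint.of_nonneg (CFC.sqrt_nonneg A)
  have hRnorm : ∀ w : H, ‖R w‖ ^ 2 = RCLike.re (⟪A w, w⟫_ℂ) := by
    intro w
    have h1 : (⟪R (R w), w⟫_ℂ) = ⟪R w, R w⟫_ℂ := hRsa.isSymmetric (R w) w
    have h2 : R (R w) = A w := by rw [← ContinuousLinearMap.mul_apply, hRR]
    rw [← inner_self_eq_norm_sq (𝕜 := ℂ), ← h1, h2]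
  have hAbound : ∀ w : H, ‖A w‖ ^ 2 ≤ ‖R‖ ^ 2 * RCLike.re (⟪A w, w⟫_ℂ) := by
    intro w
    have h2 : R (R w) = A w := by rw [← ContinuousLinearMap.mul_apply, hRR]
    have h3 : ‖A w‖ ≤ ‖R‖ * ‖R w‖ := by rw [← h2]; exact R.le_opNorm _
    have h4 : ‖A w‖ ^ 2 ≤ (‖R‖ * ‖R w‖) ^ 2 :=
      pow_le_pow_left₀ (norm_nonneg _) h3 2
    calc ‖A w‖ ^ 2 ≤ ‖R‖ ^ 2 * ‖R w‖ ^ 2 := by rw [mul_pow] at h4; exact h4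
      _ = ‖R‖ ^ 2 * RCLike.re (⟪A w, w⟫_ℂ) := by rw [hRnorm]
  -- the key convergence: A (T^k u) → 0 for every u
  have claim1 : ∀ u : H, Tendsto (fun k : ℕ => ‖A ((T ^ k) u)‖) atTop (nhds 0) := by
    intro u
    set e : ℕ → ℝ := fun k => ‖(T ^ k) u‖ ^ 2 with he
    have hant : Antitone e := by
      refine antitone_nat_of_succ_le fun n => ?_
      have h1 : ‖(T ^ (n + 1)) u‖ ≤ ‖(T ^ n) u‖ := by
        rw [pow_succ']
        simpa [ContinuousLinearMap.mul_apply] using hstep ((T ^ n) u)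
      exact pow_le_pow_left₀ (norm_nonneg _) h1 2
    have hbdd : BddBelow (Set.range e) := ⟨0, by rintro _ ⟨k, rfl⟩; positivity⟩
    have hconv : Tendsto e atTop (nhds (⨅ k, e k)) := tendsto_atTop_ciInf hant hbdd
    have hconv' : Tendsto (fun k => e (k + 1)) atTop (nhds (⨅ k, e k)) :=
      hconv.comp (tendsto_add_atTop_nat 1)
    have hdiff : Tendsto (fun k => e k - e (k + 1)) atTop (nhds 0) := by
      simpa using hconv.sub hconv'
    have hgeq : ∀ k : ℕ, RCLike.re (⟪A ((T ^ k) u), (T ^ k) u⟫_ℂ) = e k - e (k + 1) := by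
      intro k
      rw [hre]
      have : (T ^ (k + 1)) u = T ((T ^ k) u) := by
        rw [pow_succ']; simp [ContinuousLinearMap.mul_apply]
      simp [he, this]
      rw [← Function.iterate_succ_apply, Function.iterate_succ_apply']
    have hsq : Tendsto (fun k : ℕ => ‖A ((T ^ k) u)‖ ^ 2) atTop (nhds 0) := by
      have hub : ∀ k : ℕ, ‖A ((T ^ k) u)‖ ^ 2 ≤ ‖R‖ ^ 2 * (e k - e (k + 1)) := by
        intro k
        rw [← hgeq k]
        exact hAbound _
      have hmul : Tendsto (fun k => ‖R‖ ^ 2 * (e k - e (k + 1))) atTop (nhds 0) := by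
        simpa using hdiff.const_mul (‖R‖ ^ 2)
      exact squeeze_zero (fun k => sq_nonneg _) hub hmul
    have := hsq.sqrt
    simpa [Real.sqrt_sq (norm_nonneg _)] using this
  -- density of the range of S = 1 + T
  have hSsa : IsSelfAdjoint S := (IsSelfAdjoint.one (R := H →L[ℂ] H)).add hsa
  have hdense : (LinearMap.range (S : H →ₗ[ℂ] H)).topologicalClosure = ⊤ := by
    rw [Submodule.topologicalClosure_eq_top_iff, Submodule.eq_bot_iff]
    intro v hv
    have h0 : (⟪S v, S v⟫_ℂ) = 0 := by
      have hmem : S (S v) ∈ LinearMap.range (S : H →ₗ[ℂ] H) := LinearMap.mem_range_self _ _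
      have h1 : (⟪S (S v), v⟫_ℂ) = ⟪S v, S v⟫_ℂ := hSsa.isSymmetric (S v) v
      rw [← h1]
      exact hv (S (S v)) hmem
    have hSv : S v = 0 := inner_self_eq_zero.1 h0
    have : v ∈ LinearMap.ker (S : H →ₗ[ℂ] H) := hSv
    rw [hS] at this
    rw [hker] at this
    simpa using this
  -- main argument
  intro x
  rw [Metric.tendsto_atTop]
  intro ε hε
  -- approximate x by S u
  have hx : x ∈ closure ((LinearMap.range (S : H →ₗ[ℂ] H) : Submodule ℂ H) : Set H) := by
    have : x ∈ ((LinearMap.range (S : H →ₗ[ℂ] H)).topologicalClosure : Submodule ℂ H) := by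
      rw [hdense]; trivial
    rw [← Submodule.topologicalClosure_coe]; exact this
  obtain ⟨y, hy, hxy⟩ := Metric.mem_closure_iff.1 hx (ε / 4) (by linarith)
  obtain ⟨u, rfl⟩ := hy
  rw [dist_eq_norm] at hxy
  obtain ⟨N, hN⟩ := (Metric.tendsto_atTop.1 (claim1 u)) (ε / 4) (by linarith)
  refine ⟨N, fun k hk => ?_⟩
  have hNk := hN k hk
  rw [Real.dist_eq, sub_zero, abs_of_nonneg (norm_nonneg _)] at hNk ⊢
  -- algebraic decomposition
  have happ : ∀ (m : ℕ) (w : H), (T ^ m) (T w) = (T ^ (m + 1)) w := by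
    intro m w
    rw [pow_succ]; simp [ContinuousLinearMap.mul_apply]
  have hSu : (T ^ (k + 1)) (S u) - (T ^ k) (S u) = -(A ((T ^ k) u)) := by
    have e1 : (T ^ (k + 1)) (S u) = (T ^ (k + 1)) u + (T ^ (k + 2)) u := by
      simp [hS, ContinuousLinearMap.add_apply, map_add, happ (k + 1) u]
    have e2 : (T ^ k) (S u) = (T ^ k) u + (T ^ (k + 1)) u := by
      simp [hS, ContinuousLinearMap.add_apply, map_add, happ k u]
    have e3 : A ((T ^ k) u) = (T ^ k) u - (T ^ (k + 2)) u := by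
      have : (T ^ 2) ((T ^ k) u) = (T ^ (k + 2)) u := by
        rw [← ContinuousLinearMap.mul_apply, ← pow_add]; ring_nf
      rw [hAdef, ContinuousLinearMap.sub_apply, this, ContinuousLinearMap.one_apply]
    rw [e1, e2, e3]
    abel
  have hdecomp : (T ^ (k + 1)) x - (T ^ k) x =
      ((T ^ (k + 1)) (x - S u) - (T ^ k) (x - S u)) - A ((T ^ k) u) := by
    rw [map_sub, map_sub]
    have := hSu
    rw [← neg_eq_iff_eq_neg] at this
    rw [← this]
    abel
  rw [hdecomp]
  have b1 : ‖(T ^ (k + 1)) (x - S u)‖ ≤ ‖x - S u‖ := hpow _ _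
  have b2 : ‖(T ^ k) (x - S u)‖ ≤ ‖x - S u‖ := hpow _ _
  calc ‖((T ^ (k + 1)) (x - S u) - (T ^ k) (x - S u)) - A ((T ^ k) u)‖
      ≤ ‖(T ^ (k + 1)) (x - S u) - (T ^ k) (x - S u)‖ + ‖A ((T ^ k) u)‖ := norm_sub_le _ _
    _ ≤ (‖(T ^ (k + 1)) (x - S u)‖ + ‖(T ^ k) (x - S u)‖) + ‖A ((T ^ k) u)‖ := by
        have := norm_sub_le ((T ^ (k + 1)) (x - S u)) ((T ^ k) (x - S u))
        linarith
    _ < ε := by have hxy' : ‖x - S u‖ < ε / 4 := hxy; linarith
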